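/- Let 1 ≤ k < n, let κ_1 < κ_2 < … < κ_n be real numbers, and let A be a totally nonnegative real k×n matrix of rank k. Define θ_j(x, y, t) = κ_j x + κ_j² y + κ_j³ t, f_i(x, y, t) = Σ_{j=1}^n A_{ij} e^{θ_j(x,y,t)}, and τ(x, y, t) = det( ∂_x^{l−1} f_i(x, y, t) )_{i,l=1}^k. Then τ(x, y, t) > 0 for all (x, y, t) ∈ ℝ³, and consequently the multiline soliton u(x, y, t) = 2 ∂_x² log τ(x, y, t) is well-defined and real-analytic on all of ℝ³ (i.e. the soliton solution generated by the soliton data (κ, [A]) is regular for all real x, y, t). -/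

import Mathlib

open scoped BigOperators

/-- The `k × k` maximal minor of a real `k × n` matrix `A` on the set of columns `I`
(defined to be `0` when `I` does not have exactly `k` elements). -/
noncomputable def maxMinor {k n : ℕ} (A : Matrix (Fin k) (Fin n) ℝ)
    (I : Finset (Fin n)) : ℝ :=
  if h : I.card = k then
    (A.submatrix id fun j => ((I.orderIsoOfFin h) j : Fin n)).det
  else 0

open Finset Matrix Equiv Function

noncomputable def rowMinor {k n : ℕ} (B : Matrix (Fin n) (Fin k) ℝ)
    (I : Finset (Fin n)) : ℝ :=
  if h : I.card = k then
    (B.submatrix (fun j => ((I.orderIsoOfFin h) j : Fin n)) id).det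
  else 0

lemma det_mul_expand {m' n' : Type*} [Fintype m'] [Fintype n'] [DecidableEq m'] [DecidableEq n']
    (A : Matrix m' n' ℝ) (B : Matrix n' m' ℝ) :
    (A * B).det = ∑ p : m' → n', ∑ σ : Equiv.Perm m',
      ((Equiv.Perm.sign σ : ℤ) : ℝ) * ∏ i, A (σ i) (p i) * B (p i) i := by
  simp only [Matrix.det_apply', Matrix.mul_apply, Finset.prod_univ_sum, Finset.mul_sum,
    Fintype.piFinset_univ]
  rw [Finset.sum_comm]

lemma det_mul_vanish {m' n' : Type*} [Fintype m'] [Fintype n'] [DecidableEq m'] [DecidableEq n']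
    (A : Matrix m' n' ℝ) (B : Matrix n' m' ℝ) {p : m' → n'} (H : ¬ Function.Injective p) :
    ∑ σ : Equiv.Perm m',
      ((Equiv.Perm.sign σ : ℤ) : ℝ) * ∏ i, A (σ i) (p i) * B (p i) i = 0 := by
  obtain ⟨i, j, hpij, hij⟩ : ∃ i j, p i = p j ∧ i ≠ j := by
    rw [Function.Injective] at H
    push_neg at H
    exact H
  exact Finset.sum_involution (fun σ _ => σ * Equiv.swap i j)
      (fun σ _ => by
        have : (∏ x, A (σ x) (p x)) = ∏ x, A ((σ * Equiv.swap i j) x) (p x) :=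
          Fintype.prod_equiv (Equiv.swap i j) _ _ (by simp [Equiv.apply_swap_eq_self hpij])
        simp [this, Equiv.Perm.sign_swap hij, -Equiv.Perm.sign_swap', Finset.prod_mul_distrib])
      (fun σ _ _ => (not_congr Equiv.mul_swap_eq_iff).mpr hij) (fun _ _ => Finset.mem_univ _)
      fun σ _ => Equiv.mul_swap_involutive i j σ

theorem cauchy_binet {k n : ℕ} (A : Matrix (Fin k) (Fin n) ℝ) (B : Matrix (Fin n) (Fin k) ℝ) :
    (A * B).det = ∑ I ∈ Finset.powersetCard k (Finset.univ : Finset (Fin n)),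
      maxMinor A I * rowMinor B I := by
  classical
  set G : (Fin k → Fin n) → ℝ := fun p => ∑ σ : Equiv.Perm (Fin k),
      ((Equiv.Perm.sign σ : ℤ) : ℝ) * ∏ i, A (σ i) (p i) * B (p i) i with hG
  have h1 : (A * B).det = ∑ p ∈ Finset.univ.filter (fun p : Fin k → Fin n =>
      Function.Injective p), G p := by
    rw [det_mul_expand]
    refine (Finset.sum_subset (Finset.filter_subset _ _) fun p _ hp => ?_).symm
    exact det_mul_vanish A B (by simpa using hp)
  have h2 : ∑ p ∈ Finset.univ.filter (fun p : Fin k → Fin n => Function.Injective p), G p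
      = ∑ I ∈ Finset.powersetCard k (Finset.univ : Finset (Fin n)),
        ∑ p ∈ (Finset.univ.filter (fun p : Fin k → Fin n => Function.Injective p)).filter
          (fun p => Finset.image p Finset.univ = I), G p := by
    refine (Finset.sum_fiberwise_of_maps_to (fun p hp => ?_) G).symm
    rw [Finset.mem_filter] at hp
    rw [Finset.mem_powersetCard]
    exact ⟨Finset.subset_univ _, by
      rw [Finset.card_image_of_injective _ hp.2, Finset.card_univ, Fintype.card_fin]⟩
  rw [h1, h2]
  refine Finset.sum_congr rfl fun I hI => ?_
  have h : I.card = k := (Finset.mem_powersetCard.mp hI).2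
  set c : Fin k → Fin n := fun l => ((I.orderIsoOfFin h) l : Fin n) with hc
  have hcinj : Function.Injective c := fun a b hab => by
    apply (I.orderIsoOfFin h).injective
    exact Subtype.ext hab
  have himc : Finset.image c Finset.univ = I := by
    have := Finset.range_orderEmbOfFin I h
    rw [← Finset.coe_inj, Finset.coe_image, Finset.coe_univ, Set.image_univ]
    rw [← this]
    rfl
  -- RHS: minors product equals det of product of submatrices
  have h3 : maxMinor A I * rowMinor B I
      = ((A.submatrix id c) * (B.submatrix c id)).det := by
    rw [maxMinor, rowMinor, dif_pos h, dif_pos h, Matrix.det_mul]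
  rw [h3, det_mul_expand]
  have h4 : ∀ q : Fin k → Fin k,
      (∑ σ : Equiv.Perm (Fin k), ((Equiv.Perm.sign σ : ℤ) : ℝ)
        * ∏ i, (A.submatrix id c) (σ i) (q i) * (B.submatrix c id) (q i) i) = G (c ∘ q) := by
    intro q; rfl
  rw [Finset.filter_filter]
  rw [show (∑ q : Fin k → Fin k, ∑ σ : Equiv.Perm (Fin k), ((Equiv.Perm.sign σ : ℤ) : ℝ)
        * ∏ i, (A.submatrix id c) (σ i) (q i) * (B.submatrix c id) (q i) i)
      = ∑ q : Fin k → Fin k, G (c ∘ q) from Finset.sum_congr rfl fun q _ => h4 q]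
  have h5 : ∑ q : Fin k → Fin k, G (c ∘ q)
      = ∑ q ∈ Finset.univ.filter (fun q : Fin k → Fin k => Function.Injective q), G (c ∘ q) := by
    refine (Finset.sum_subset (Finset.filter_subset _ _) fun q _ hq => ?_).symm
    have : ¬ Function.Injective (c ∘ q) := by
      intro hcq
      have hq' : ¬ Function.Injective q := by simpa using hq
      exact hq' (Function.Injective.of_comp hcq)
    exact det_mul_vanish A B this
  rw [h5]
  refine Finset.sum_bij' (i := fun p hp => fun l => (I.orderIsoOfFin h).symm
      (⟨p l, by
        have hp2 : Finset.image p Finset.univ = I := ((Finset.mem_filter.mp hp).2).2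
        rw [← hp2]
        exact Finset.mem_image_of_mem p (Finset.mem_univ l)⟩ : I))
    (j := fun q hq => c ∘ q) ?_ ?_ ?_ ?_ ?_
  · intro p hp
    simp only [Finset.mem_filter, Finset.mem_univ, true_and]
    intro a b hab
    have hpinj : Function.Injective p := ((Finset.mem_filter.mp hp).2).1
    apply hpinj
    have := congrArg (fun z => ((I.orderIsoOfFin h) z : Fin n)) hab
    simpa using this
  · intro q hq
    have hqinj : Function.Injective q := by
      simpa using (Finset.mem_filter.mp hq).2
    refine Finset.mem_filter.mpr ⟨Finset.mem_univ _, hcinj.comp hqinj, ?_⟩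
    have hqbij : Function.Bijective q := Finite.injective_iff_bijective.mp hqinj
    rw [show Finset.image (c ∘ q) Finset.univ = Finset.image c (Finset.image q Finset.univ) from
      (Finset.image_image).symm]
    rw [Finset.image_univ_of_surjective hqbij.surjective, himc]
  · intro p hp
    funext l
    show c _ = p l
    simp only [hc]
    rw [OrderIso.apply_symm_apply]
  · intro q hq
    funext l
    apply (I.orderIsoOfFin h).toEquiv.symm_apply_eq.mpr
    apply Subtype.ext
    rfl
  · intro p hp
    congr 1
    funext l
    show p l = c _
    simp only [hc]
    rw [OrderIso.apply_symm_apply]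

lemma hasDerivAt_expsum {ι : Type*} (s : Finset ι) (c a b : ι → ℝ) (z : ℝ) :
    HasDerivAt (fun x => ∑ j ∈ s, c j * Real.exp (a j * x + b j))
      (∑ j ∈ s, c j * a j * Real.exp (a j * z + b j)) z := by
  refine HasDerivAt.fun_sum (𝕜 := ℝ) (F := ℝ) fun j hj => ?_
  have h1 : HasDerivAt (fun x : ℝ => a j * x + b j) (a j) z := by
    simpa using ((hasDerivAt_id z).const_mul (a j)).add_const (b j)
  have h2 := (h1.exp).const_mul (c j)
  exact h2.congr_deriv (by ring)

lemma iteratedDeriv_expsum {ι : Type*} (s : Finset ι) (c a b : ι → ℝ) (m : ℕ) :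
    iteratedDeriv m (fun x => ∑ j ∈ s, c j * Real.exp (a j * x + b j))
      = fun x => ∑ j ∈ s, c j * a j ^ m * Real.exp (a j * x + b j) := by
  induction m with
  | zero => simp
  | succ m ih =>
    rw [iteratedDeriv_succ, ih]
    funext z
    rw [show (fun x => ∑ j ∈ s, c j * a j ^ m * Real.exp (a j * x + b j))
        = fun x => ∑ j ∈ s, (c j * a j ^ m) * Real.exp (a j * x + b j) from rfl]
    rw [(hasDerivAt_expsum s (fun j => c j * a j ^ m) a b z).deriv]
    exact Finset.sum_congr rfl fun j _ => by ring

/-- Vandermonde factor of a column set. -/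
noncomputable def vdm (k n : ℕ) (κ : Fin n → ℝ) (I : Finset (Fin n)) : ℝ :=
  if h : I.card = k then
    ∏ i : Fin k, ∏ j ∈ Finset.Ioi i, (κ (I.orderEmbOfFin h j) - κ (I.orderEmbOfFin h i))
  else 0

lemma vdm_pos {k n : ℕ} {κ : Fin n → ℝ} (hκ : StrictMono κ) {I : Finset (Fin n)}
    (h : I.card = k) : 0 < vdm k n κ I := by
  rw [vdm, dif_pos h]
  refine Finset.prod_pos fun i _ => Finset.prod_pos fun j hj => ?_
  exact sub_pos.mpr (hκ ((I.orderEmbOfFin h).strictMono (Finset.mem_Ioi.mp hj)))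

lemma sum_orderEmb {k n : ℕ} {I : Finset (Fin n)} (h : I.card = k) (g : Fin n → ℝ) :
    ∑ i : Fin k, g (I.orderEmbOfFin h i) = ∑ j ∈ I, g j := by
  rw [← Finset.sum_coe_sort I g]
  exact Fintype.sum_equiv (I.orderIsoOfFin h).toEquiv _ _ (fun i => rfl)

lemma rowMinor_eq {k n : ℕ} (κ : Fin n → ℝ) (x y t : ℝ) {I : Finset (Fin n)}
    (h : I.card = k) :
    rowMinor (Matrix.of fun (j : Fin n) (l : Fin k) =>
        κ j ^ (l : ℕ) * Real.exp (κ j * x + κ j ^ 2 * y + κ j ^ 3 * t)) I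
      = vdm k n κ I * Real.exp ((∑ j ∈ I, κ j) * x + (∑ j ∈ I, κ j ^ 2) * y
          + (∑ j ∈ I, κ j ^ 3) * t) := by
  rw [rowMinor, dif_pos h]
  have hM : (Matrix.of fun (j : Fin n) (l : Fin k) =>
        κ j ^ (l : ℕ) * Real.exp (κ j * x + κ j ^ 2 * y + κ j ^ 3 * t)).submatrix
        (fun j => ((I.orderIsoOfFin h) j : Fin n)) id
      = Matrix.of fun (j l : Fin k) =>
          (fun j' : Fin k => Real.exp (κ (I.orderEmbOfFin h j') * x
            + κ (I.orderEmbOfFin h j') ^ 2 * y + κ (I.orderEmbOfFin h j') ^ 3 * t)) j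
          * (Matrix.vandermonde fun j' : Fin k => κ (I.orderEmbOfFin h j')) j l := by
    ext j l
    simp only [Matrix.submatrix_apply, Matrix.of_apply, Matrix.vandermonde, id_eq]
    rw [Finset.coe_orderIsoOfFin_apply]
    rw [mul_comm]
  rw [hM, Matrix.det_mul_column, Matrix.det_vandermonde]
  rw [← Real.exp_sum, mul_comm]
  congr 1
  · rw [vdm, dif_pos h]
  · rw [show (∑ i : Fin k, (κ (I.orderEmbOfFin h i) * x
        + κ (I.orderEmbOfFin h i) ^ 2 * y + κ (I.orderEmbOfFin h i) ^ 3 * t))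
      = (∑ i : Fin k, κ (I.orderEmbOfFin h i)) * x
        + (∑ i : Fin k, κ (I.orderEmbOfFin h i) ^ 2) * y
        + (∑ i : Fin k, κ (I.orderEmbOfFin h i) ^ 3) * t by
        simp [Finset.sum_add_distrib, Finset.sum_mul]]
    rw [sum_orderEmb h κ, sum_orderEmb h (fun j => κ j ^ 2), sum_orderEmb h (fun j => κ j ^ 3)]

lemma exists_nonzero_minor {k n : ℕ} (A : Matrix (Fin k) (Fin n) ℝ) (hrank : A.rank = k) :
    ∃ I : Finset (Fin n), I.card = k ∧ maxMinor A I ≠ 0 := by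
  classical
  have hsp : Submodule.span ℝ (Set.range Aᵀ) = ⊤ := by
    apply Submodule.eq_top_of_finrank_eq
    rw [show Set.range Aᵀ = Set.range A.col from rfl, ← Matrix.rank_eq_finrank_span_cols, hrank, Module.finrank_pi, Fintype.card_fin]
  obtain ⟨b, hbsub, hbspan, hbind⟩ := exists_linearIndependent ℝ (Set.range Aᵀ)
  rw [hsp] at hbspan
  have hfin : b.Finite := hbind.setFinite
  haveI : Fintype b := hfin.fintype
  have hcard : Fintype.card b = k := by
    let bas : Module.Basis b ℝ (Fin k → ℝ) := Module.Basis.mk hbind (by rw [Subtype.range_coe, hbspan])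
    have := Module.finrank_eq_card_basis bas
    rw [Module.finrank_pi, Fintype.card_fin] at this
    exact this.symm
  choose idx hidx using fun v : b => show ∃ j : Fin n, Aᵀ j = (v : Fin k → ℝ) from hbsub v.2
  have hidxinj : Function.Injective idx := fun v w hvw =>
    Subtype.ext (by rw [← hidx v, ← hidx w, hvw])
  set I : Finset (Fin n) := Finset.image idx Finset.univ with hIdef
  have h : I.card = k := by
    rw [hIdef, Finset.card_image_of_injective _ hidxinj, Finset.card_univ, hcard]
  refine ⟨I, h, ?_⟩
  rw [maxMinor, dif_pos h]
  set c : Fin k → Fin n := fun l => ((I.orderIsoOfFin h) l : Fin n) with hcdef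
  set M : Matrix (Fin k) (Fin k) ℝ := A.submatrix id c with hMdef
  -- each column index in I comes from some v : b
  have hmem : ∀ l : Fin k, ∃ v : b, idx v = c l := by
    intro l
    have : c l ∈ I := by
      have := Finset.orderEmbOfFin_mem I h l
      exact this
    rw [hIdef] at this
    obtain ⟨v, _, hv⟩ := Finset.mem_image.mp this
    exact ⟨v, hv⟩
  choose e he using hmem
  have heinj : Function.Injective e := by
    intro l l' hll'
    have hcinj : Function.Injective c := fun a b hab =>
      (I.orderIsoOfFin h).injective (Subtype.ext hab)
    apply hcinj
    rw [← he l, ← he l', hll']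
  have hcols : LinearIndependent ℝ (fun l : Fin k => Mᵀ l) := by
    have hcomp : (fun l : Fin k => Mᵀ l) = (fun v : b => (v : Fin k → ℝ)) ∘ e := by
      funext l
      show Mᵀ l = _
      have : Mᵀ l = Aᵀ (c l) := by
        ext i
        rfl
      rw [this, ← he l, hidx (e l)]
      rfl
    rw [hcomp]
    exact hbind.comp e heinj
  have : IsUnit M := Matrix.linearIndependent_cols_iff_isUnit.mp hcols
  exact ((Matrix.isUnit_iff_isUnit_det M).mp this).ne_zero

/-- The building-block exponential sums. -/
noncomputable def solitonT (k n : ℕ) (κ : Fin n → ℝ) (A : Matrix (Fin k) (Fin n) ℝ)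
    (m : ℕ) (p : ℝ × ℝ × ℝ) : ℝ :=
  ∑ I ∈ Finset.powersetCard k (Finset.univ : Finset (Fin n)),
    maxMinor A I * vdm k n κ I * (∑ j ∈ I, κ j) ^ m *
      Real.exp ((∑ j ∈ I, κ j) * p.1 + (∑ j ∈ I, κ j ^ 2) * p.2.1
        + (∑ j ∈ I, κ j ^ 3) * p.2.2)

lemma solitonT_slice_hasDerivAt (k n : ℕ) (κ : Fin n → ℝ) (A : Matrix (Fin k) (Fin n) ℝ)
    (m : ℕ) (y t z : ℝ) :
    HasDerivAt (fun x' => solitonT k n κ A m (x', y, t))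
      (solitonT k n κ A (m + 1) (z, y, t)) z := by
  have h := hasDerivAt_expsum (Finset.powersetCard k (Finset.univ : Finset (Fin n)))
    (fun I => maxMinor A I * vdm k n κ I * (∑ j ∈ I, κ j) ^ m)
    (fun I => ∑ j ∈ I, κ j)
    (fun I => (∑ j ∈ I, κ j ^ 2) * y + (∑ j ∈ I, κ j ^ 3) * t) z
  have e1 : (fun x' => solitonT k n κ A m (x', y, t))
      = fun x => ∑ I ∈ Finset.powersetCard k (Finset.univ : Finset (Fin n)),
          (maxMinor A I * vdm k n κ I * (∑ j ∈ I, κ j) ^ m) *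
            Real.exp ((∑ j ∈ I, κ j) * x
              + ((∑ j ∈ I, κ j ^ 2) * y + (∑ j ∈ I, κ j ^ 3) * t)) := by
    funext x
    exact Finset.sum_congr rfl fun I _ => by rw [← add_assoc]
  have e2 : solitonT k n κ A (m + 1) (z, y, t)
      = ∑ I ∈ Finset.powersetCard k (Finset.univ : Finset (Fin n)),
          (maxMinor A I * vdm k n κ I * (∑ j ∈ I, κ j) ^ m) * (∑ j ∈ I, κ j) *
            Real.exp ((∑ j ∈ I, κ j) * z
              + ((∑ j ∈ I, κ j ^ 2) * y + (∑ j ∈ I, κ j ^ 3) * t)) := by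
    refine Finset.sum_congr rfl fun I _ => ?_
    rw [← add_assoc]
    ring
  rw [e1, e2]
  exact h


/-- for TNN soliton data `(κ, [A])`, the Wronskian with respect to `x`
of `f_i(x,y,t) = Σ_j A_{ij} e^{κ_j x + κ_j² y + κ_j³ t}` is strictly positive on all
of `ℝ³`; consequently the multiline KP soliton `u = 2 ∂ₓ² log τ` is well-defined and
real-analytic on `ℝ³`. -/
theorem multiline_soliton_regular
    (k n : ℕ) (hk : 1 ≤ k) (hkn : k < n)
    (κ : Fin n → ℝ) (hκ : StrictMono κ)
    (A : Matrix (Fin k) (Fin n) ℝ) (hrank : A.rank = k)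
    (hTNN : ∀ I : Finset (Fin n), I.card = k → 0 ≤ maxMinor A I)
    (f : Fin k → ℝ → ℝ → ℝ → ℝ)
    (hf : ∀ i x y t, f i x y t =
      ∑ j, A i j * Real.exp (κ j * x + κ j ^ 2 * y + κ j ^ 3 * t))
    (τ : ℝ → ℝ → ℝ → ℝ)
    (hτ : ∀ x y t, τ x y t =
      Matrix.det (Matrix.of fun i l : Fin k =>
        iteratedDeriv (l : ℕ) (fun x' => f i x' y t) x)) :
    (∀ x y t, 0 < τ x y t) ∧
    AnalyticOnNhd ℝ
      (fun p : ℝ × ℝ × ℝ =>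
        2 * iteratedDeriv 2 (fun x' => Real.log (τ x' p.2.1 p.2.2)) p.1)
      Set.univ := by
  classical
  have key : ∀ x y t, τ x y t = solitonT k n κ A 0 (x, y, t) := by
    intro x y t
    rw [hτ]
    set B : Matrix (Fin n) (Fin k) ℝ := Matrix.of fun j l =>
      κ j ^ (l : ℕ) * Real.exp (κ j * x + κ j ^ 2 * y + κ j ^ 3 * t) with hB
    have hmat : (Matrix.of fun i l : Fin k => iteratedDeriv (l : ℕ) (fun x' => f i x' y t) x)
        = A * B := by
      ext i l
      have hfi : (fun x' => f i x' y t)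
          = fun x' => ∑ j, A i j * Real.exp (κ j * x' + (κ j ^ 2 * y + κ j ^ 3 * t)) := by
        funext x'
        rw [hf]
        exact Finset.sum_congr rfl fun j _ => by rw [add_assoc]
      rw [Matrix.of_apply, hfi, iteratedDeriv_expsum, Matrix.mul_apply]
      refine Finset.sum_congr rfl fun j _ => ?_
      rw [hB]
      simp only [Matrix.of_apply]
      rw [← add_assoc]
      ring
    rw [hmat, cauchy_binet]
    unfold solitonT
    refine Finset.sum_congr rfl fun I hI => ?_
    have h : I.card = k := (Finset.mem_powersetCard.mp hI).2
    rw [hB, rowMinor_eq κ x y t h]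
    simp only [pow_zero, mul_one]
    ring
  obtain ⟨I₀, hI₀card, hI₀⟩ := exists_nonzero_minor A hrank
  have hI₀mem : I₀ ∈ Finset.powersetCard k (Finset.univ : Finset (Fin n)) :=
    Finset.mem_powersetCard.mpr ⟨Finset.subset_univ _, hI₀card⟩
  have hpos : ∀ p : ℝ × ℝ × ℝ, 0 < solitonT k n κ A 0 p := by
    intro p
    unfold solitonT
    refine Finset.sum_pos' (fun I hI => ?_) ⟨I₀, hI₀mem, ?_⟩
    · have h := (Finset.mem_powersetCard.mp hI).2
      have h1 : 0 ≤ maxMinor A I := hTNN I h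
      have h2 : 0 < vdm k n κ I := vdm_pos hκ h
      simp only [pow_zero, mul_one]
      exact mul_nonneg (mul_nonneg h1 h2.le) (Real.exp_pos _).le
    · have h1 : 0 < maxMinor A I₀ := lt_of_le_of_ne (hTNN I₀ hI₀card) (Ne.symm hI₀)
      have h2 : 0 < vdm k n κ I₀ := vdm_pos hκ hI₀card
      simp only [pow_zero, mul_one]
      exact mul_pos (mul_pos h1 h2) (Real.exp_pos _)
  have hτpos : ∀ x y t, 0 < τ x y t := fun x y t => by rw [key]; exact hpos (x, y, t)
  refine ⟨hτpos, ?_⟩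
  have hfun : (fun p : ℝ × ℝ × ℝ =>
        2 * iteratedDeriv 2 (fun x' => Real.log (τ x' p.2.1 p.2.2)) p.1)
      = fun p => 2 * ((solitonT k n κ A 2 p * solitonT k n κ A 0 p
          - solitonT k n κ A 1 p * solitonT k n κ A 1 p) / (solitonT k n κ A 0 p) ^ 2) := by
    funext p
    obtain ⟨x, y, t⟩ := p
    simp only
    have hT0 : ∀ z, HasDerivAt (fun x' => solitonT k n κ A 0 (x', y, t))
        (solitonT k n κ A 1 (z, y, t)) z := fun z => solitonT_slice_hasDerivAt k n κ A 0 y t z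
    have hT1 : ∀ z, HasDerivAt (fun x' => solitonT k n κ A 1 (x', y, t))
        (solitonT k n κ A 2 (z, y, t)) z := fun z => solitonT_slice_hasDerivAt k n κ A 1 y t z
    have hlog : deriv (fun x' => Real.log (τ x' y t))
        = fun z => solitonT k n κ A 1 (z, y, t) / solitonT k n κ A 0 (z, y, t) := by
      funext z
      have h1 : (fun x' => Real.log (τ x' y t))
          = fun x' => Real.log (solitonT k n κ A 0 (x', y, t)) := by
        funext x'; rw [key]
      rw [h1]
      exact ((hT0 z).log (ne_of_gt (hpos (z, y, t)))).deriv
    rw [(by norm_num : (2:ℕ) = 1 + 1), iteratedDeriv_succ, iteratedDeriv_one, hlog]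
    have hq : HasDerivAt (fun z => solitonT k n κ A 1 (z, y, t) / solitonT k n κ A 0 (z, y, t))
        ((solitonT k n κ A 2 (x, y, t) * solitonT k n κ A 0 (x, y, t)
          - solitonT k n κ A 1 (x, y, t) * solitonT k n κ A 1 (x, y, t))
          / (solitonT k n κ A 0 (x, y, t)) ^ 2) x :=
      (hT1 x).div (hT0 x) (ne_of_gt (hpos (x, y, t)))
    rw [hq.deriv]
  rw [hfun]
  intro p _
  have hTan : ∀ m : ℕ, AnalyticAt ℝ (solitonT k n κ A m) p := by
    intro m
    unfold solitonT
    refine Finset.analyticAt_fun_sum _ fun I _ => ?_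
    refine analyticAt_const.mul ?_
    refine AnalyticAt.rexp ?_
    exact ((analyticAt_const.mul analyticAt_fst).add
      (analyticAt_const.mul (analyticAt_fst.comp analyticAt_snd))).add
      (analyticAt_const.mul (analyticAt_snd.comp analyticAt_snd))
  refine analyticAt_const.mul (AnalyticAt.div ?_ ((hTan 0).pow 2) ?_)
  · exact ((hTan 2).mul (hTan 0)).sub ((hTan 1).mul (hTan 1))
  · exact pow_ne_zero 2 (ne_of_gt (hpos p))
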